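/- Let {A_t}_{t≥0} be an arbitrary sequence of subsets of {1,…,m} with |A_t| ≥ ηm for all t, and suppose S satisfies the BRIP condition with parameters (η, ε) where ε < 1/7. Let the iterates be generated by encoded proximal gradient: w_{t+1} = argmin_w { ⟨∇p̃^{A_t}(w_t), w − w_t⟩ + λh(w) + (1/(2α))‖w − w_t‖² }, with constant step size 0 < α < 1/M. Then for every t ≥ 1, (1/t)·Σ_{τ=1}^t f(w_τ) − ((1+3ε)/(1−7ε))·f(w*) ≤ (4ε f(w_0) + (1/(2α))‖w_0 − w*‖²) / ((1−7ε) t). -/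

import Mathlib

open Matrix Finset

noncomputable section

namespace Stmt4

/-- `p(w) = (1/2)‖Xw − y‖²`. -/
def pObj {n p : ℕ} (X : Matrix (Fin n) (Fin p) ℝ) (y : Fin n → ℝ)
    (w : Fin p → ℝ) : ℝ :=
  (1 / 2) * ((X *ᵥ w - y) ⬝ᵥ (X *ᵥ w - y))

/-- The original objective `f(w) = p(w) + λ h(w)`. -/
def objF {n p : ℕ} (X : Matrix (Fin n) (Fin p) ℝ) (y : Fin n → ℝ) (lam : ℝ)
    (h : (Fin p → ℝ) → ℝ) (w : Fin p → ℝ) : ℝ :=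
  pObj X y w + lam * h w

/-- `‖S_A z‖² = ∑_{i ∈ A} ‖S_i z‖²`, the quadratic form of `S_Aᵀ S_A`. -/
def encSq {n r m : ℕ} (S : Fin m → Matrix (Fin r) (Fin n) ℝ) (A : Finset (Fin m))
    (z : Fin n → ℝ) : ℝ :=
  ∑ i ∈ A, (S i *ᵥ z) ⬝ᵥ (S i *ᵥ z)

/-- Gradient of `p̃^A(w) = (1/2)‖S_A(Xw − y)‖²`, namely `Xᵀ S_Aᵀ S_A (Xw − y)`. -/
def gradPTilde {n p r m : ℕ} (X : Matrix (Fin n) (Fin p) ℝ) (y : Fin n → ℝ)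
    (S : Fin m → Matrix (Fin r) (Fin n) ℝ) (A : Finset (Fin m)) (w : Fin p → ℝ) :
    Fin p → ℝ :=
  Xᵀ *ᵥ (∑ i ∈ A, (S i)ᵀ *ᵥ (S i *ᵥ (X *ᵥ w - y)))

/-- The proximal subproblem objective
`⟨∇p̃^A(wₜ), v − wₜ⟩ + λ h(v) + (1/(2α))‖v − wₜ‖²`. -/
def proxObj {n p r m : ℕ} (X : Matrix (Fin n) (Fin p) ℝ) (y : Fin n → ℝ)
    (S : Fin m → Matrix (Fin r) (Fin n) ℝ) (lam α : ℝ) (h : (Fin p → ℝ) → ℝ)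
    (A : Finset (Fin m)) (wt v : Fin p → ℝ) : ℝ :=
  gradPTilde X y S A wt ⬝ᵥ (v - wt) + lam * h v +
    (1 / (2 * α)) * ((v - wt) ⬝ᵥ (v - wt))

lemma dot_self_nonneg' {n : ℕ} (z : Fin n → ℝ) : 0 ≤ z ⬝ᵥ z :=
  Finset.sum_nonneg fun i _ => mul_self_nonneg (z i)

lemma dot_flip {n : ℕ} (u v : Fin n → ℝ) : (u - v) ⬝ᵥ (u - v) = (v - u) ⬝ᵥ (v - u) := by
  rw [show u - v = -(v - u) by abel, neg_dotProduct, dotProduct_neg, neg_neg]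

lemma sum_dot {n : ℕ} {ι : Type*} (s : Finset ι) (f : ι → Fin n → ℝ) (d : Fin n → ℝ) :
    (∑ i ∈ s, f i) ⬝ᵥ d = ∑ i ∈ s, f i ⬝ᵥ d := by
  simp only [dotProduct, Finset.sum_apply, Finset.sum_mul]
  exact Finset.sum_comm

lemma dot_sub_le {n : ℕ} (a b : Fin n → ℝ) :
    (a - b) ⬝ᵥ (a - b) ≤ 2 * (a ⬝ᵥ a) + 2 * (b ⬝ᵥ b) := by
  have h1 : 0 ≤ (a + b) ⬝ᵥ (a + b) := dot_self_nonneg' _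
  have e1 : (a - b) ⬝ᵥ (a - b) + (a + b) ⬝ᵥ (a + b) = 2 * (a ⬝ᵥ a) + 2 * (b ⬝ᵥ b) := by
    simp only [dotProduct_add, add_dotProduct, dotProduct_sub, sub_dotProduct]
    ring
  linarith

lemma encSq_nonneg {n r m : ℕ} (S : Fin m → Matrix (Fin r) (Fin n) ℝ)
    (A : Finset (Fin m)) (z : Fin n → ℝ) : 0 ≤ encSq S A z :=
  Finset.sum_nonneg fun i _ => dot_self_nonneg' _

lemma encSq_add {n r m : ℕ} (S : Fin m → Matrix (Fin r) (Fin n) ℝ) (A : Finset (Fin m))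
    (z d : Fin n → ℝ) :
    encSq S A (z + d) = encSq S A z +
      2 * ((∑ i ∈ A, (S i)ᵀ *ᵥ (S i *ᵥ z)) ⬝ᵥ d) + encSq S A d := by
  unfold encSq
  rw [sum_dot, Finset.mul_sum, ← Finset.sum_add_distrib, ← Finset.sum_add_distrib]
  refine Finset.sum_congr rfl fun i _ => ?_
  have h1 : ((S i)ᵀ *ᵥ (S i *ᵥ z)) ⬝ᵥ d = (S i *ᵥ z) ⬝ᵥ (S i *ᵥ d) := by
    rw [mulVec_transpose, ← dotProduct_mulVec]
  rw [mulVec_add, dotProduct_add, add_dotProduct, add_dotProduct, h1,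
    dotProduct_comm (S i *ᵥ d) (S i *ᵥ z)]
  ring

lemma pTilde_expand {n p r m : ℕ} (X : Matrix (Fin n) (Fin p) ℝ) (y : Fin n → ℝ)
    (S : Fin m → Matrix (Fin r) (Fin n) ℝ) (A : Finset (Fin m)) (wt w' : Fin p → ℝ) :
    (1/2) * encSq S A (X *ᵥ w' - y) =
      (1/2) * encSq S A (X *ᵥ wt - y) + gradPTilde X y S A wt ⬝ᵥ (w' - wt) +
        (1/2) * encSq S A (X *ᵥ (w' - wt)) := by
  have hz : X *ᵥ w' - y = (X *ᵥ wt - y) + X *ᵥ (w' - wt) := by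
    rw [mulVec_sub]; abel
  rw [hz, encSq_add]
  have hg : gradPTilde X y S A wt ⬝ᵥ (w' - wt) =
      (∑ i ∈ A, (S i)ᵀ *ᵥ (S i *ᵥ (X *ᵥ wt - y))) ⬝ᵥ (X *ᵥ (w' - wt)) := by
    unfold gradPTilde
    rw [mulVec_transpose, dotProduct_mulVec]
  rw [hg]; ring

lemma dot_combo' {p : ℕ} (P Q : Fin p → ℝ) (a b : ℝ) (hab : a + b = 1) :
    (a • P + b • Q) ⬝ᵥ (a • P + b • Q) =
      a * (P ⬝ᵥ P) + b * (Q ⬝ᵥ Q) - a * b * ((P - Q) ⬝ᵥ (P - Q)) := by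
  simp only [dotProduct_add, add_dotProduct, dotProduct_sub, sub_dotProduct,
    smul_dotProduct, dotProduct_smul, smul_eq_mul]
  linear_combination (a * (P ⬝ᵥ P) + b * (Q ⬝ᵥ Q)) * hab

lemma dot_combo {p : ℕ} (x y w : Fin p → ℝ) (a b : ℝ) (hab : a + b = 1) :
    ((a • x + b • y) - w) ⬝ᵥ ((a • x + b • y) - w) =
      a * ((x - w) ⬝ᵥ (x - w)) + b * ((y - w) ⬝ᵥ (y - w))
        - a * b * ((x - y) ⬝ᵥ (x - y)) := by
  have hv : (a • x + b • y) - w = a • (x - w) + b • (y - w) := by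
    funext i
    simp only [Pi.add_apply, Pi.sub_apply, Pi.smul_apply, smul_eq_mul]
    linear_combination (w i) * hab
  have hxy : x - y = (x - w) - (y - w) := by abel
  rw [hv, hxy, dot_combo' _ _ _ _ hab]

lemma dot_lin {p : ℕ} (g x y w : Fin p → ℝ) (a b : ℝ) (hab : a + b = 1) :
    g ⬝ᵥ ((a • x + b • y) - w) = a * (g ⬝ᵥ (x - w)) + b * (g ⬝ᵥ (y - w)) := by
  have hv : (a • x + b • y) - w = a • (x - w) + b • (y - w) := by
    funext i
    simp only [Pi.add_apply, Pi.sub_apply, Pi.smul_apply, smul_eq_mul]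
    linear_combination (w i) * hab
  rw [hv]
  simp [dotProduct_add, dotProduct_smul, smul_eq_mul]

lemma convexOn_prox {p : ℕ} (h : (Fin p → ℝ) → ℝ) (hconv : ConvexOn ℝ Set.univ h)
    (lam : ℝ) (hlam : 0 ≤ lam) (g wt w1 : Fin p → ℝ) (c : ℝ) :
    ConvexOn ℝ Set.univ (fun v => g ⬝ᵥ (v - wt) + lam * h v +
      c * ((v - wt) ⬝ᵥ (v - wt) - (v - w1) ⬝ᵥ (v - w1))) := by
  refine ⟨convex_univ, ?_⟩
  intro x _ y _ a b ha hb hab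
  have hh := hconv.2 (Set.mem_univ x) (Set.mem_univ y) ha hb hab
  simp only [smul_eq_mul] at hh ⊢
  have hh' : lam * h (a • x + b • y) ≤ lam * (a * h x + b * h y) :=
    mul_le_mul_of_nonneg_left hh hlam
  rw [dot_lin g x y wt a b hab, dot_combo x y wt a b hab, dot_combo x y w1 a b hab]
  nlinarith [hh']

lemma min_shift {p : ℕ} {Φ : (Fin p → ℝ) → ℝ} (hΦ : ConvexOn ℝ Set.univ Φ)
    {c : ℝ} {u : Fin p → ℝ}
    (hmin : ∀ v, Φ u ≤ Φ v + c * ((v - u) ⬝ᵥ (v - u))) (v : Fin p → ℝ) :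
    Φ u ≤ Φ v := by
  set K := (v - u) ⬝ᵥ (v - u) with hK
  have step : ∀ θ : ℝ, 0 < θ → θ ≤ 1 → Φ u ≤ Φ v + θ * (c * K) := by
    intro θ hθ0 hθ1
    have hvθ := hΦ.2 (Set.mem_univ u) (Set.mem_univ v)
      (by linarith : (0:ℝ) ≤ 1 - θ) (le_of_lt hθ0) (by ring)
    simp only [smul_eq_mul] at hvθ
    have hmθ := hmin ((1 - θ) • u + θ • v)
    have hq : (((1 - θ) • u + θ • v) - u) ⬝ᵥ (((1 - θ) • u + θ • v) - u) = θ^2 * K := by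
      have he : ((1 - θ) • u + θ • v) - u = θ • (v - u) := by
        funext i
        simp only [Pi.add_apply, Pi.sub_apply, Pi.smul_apply, smul_eq_mul]
        ring
      rw [he, smul_dotProduct, dotProduct_smul, smul_eq_mul, smul_eq_mul, hK]
      ring
    rw [hq] at hmθ
    have h1 : θ * Φ u ≤ θ * (Φ v + θ * (c * K)) := by nlinarith
    exact le_of_mul_le_mul_left h1 hθ0
  by_cases hcK : c * K ≤ 0
  · have := step 1 one_pos le_rfl
    linarith
  · push_neg at hcK
    by_contra hcon
    push_neg at hcon
    set δ := Φ u - Φ v with hδ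
    have hδ0 : 0 < δ := by simp [hδ]; linarith
    have hθ0 : 0 < min 1 (δ / (2 * (c * K))) :=
      lt_min one_pos (div_pos hδ0 (by linarith))
    have h2 := step _ hθ0 (min_le_left _ _)
    have h3 : min 1 (δ / (2 * (c * K))) * (c * K) ≤ δ / 2 := by
      calc min 1 (δ / (2 * (c * K))) * (c * K) ≤ (δ / (2 * (c * K))) * (c * K) :=
            mul_le_mul_of_nonneg_right (min_le_right _ _) (le_of_lt hcK)
        _ = δ / 2 := by rw [div_mul_eq_mul_div, mul_div_mul_right _ _ (ne_of_gt hcK)]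
    linarith

/-- Theorem 3(1): convergence of encoded proximal gradient. -/
theorem encoded_proximal_gradient_convergence
    {n p r m : ℕ}
    (X : Matrix (Fin n) (Fin p) ℝ) (y : Fin n → ℝ)
    (S : Fin m → Matrix (Fin r) (Fin n) ℝ)
    (η ε lam M α : ℝ)
    (h : (Fin p → ℝ) → ℝ)
    (A : ℕ → Finset (Fin m)) (w : ℕ → Fin p → ℝ) (wstar : Fin p → ℝ)
    -- BRIP parameters
    (hη0 : 0 < η) (hη1 : η ≤ 1) (hε0 : 0 < ε) (hε : ε < 1 / 7)
    -- BRIP condition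
    (hBRIP : ∀ B : Finset (Fin m), η * m ≤ (B.card : ℝ) →
      ∀ z : Fin n → ℝ,
        (1 - ε) * (z ⬝ᵥ z) ≤ encSq S B z ∧ encSq S B z ≤ (1 + ε) * (z ⬝ᵥ z))
    (hA : ∀ t, η * m ≤ (((A t).card : ℕ) : ℝ))
    -- M is (an upper bound for) the largest eigenvalue of XᵀX
    (hM : ∀ v : Fin p → ℝ, (X *ᵥ v) ⬝ᵥ (X *ᵥ v) ≤ M * (v ⬝ᵥ v))
    -- h is convex and nonnegative (possibly non-smooth), λ ≥ 0
    (hlam : 0 ≤ lam) (hh : ∀ v, 0 ≤ h v)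
    (hconv : ConvexOn ℝ Set.univ h)
    -- step size 0 < α < 1/M
    (hα0 : 0 < α) (hα : α < 1 / M)
    -- the iterates: w_{t+1} minimizes the proximal subproblem at w_t
    (hiter : ∀ t, ∀ v : Fin p → ℝ,
      proxObj X y S lam α h (A t) (w t) (w (t + 1)) ≤
        proxObj X y S lam α h (A t) (w t) v)
    -- w* is a minimizer of f
    (hwstar : ∀ v, objF X y lam h wstar ≤ objF X y lam h v) :
    ∀ t : ℕ, 1 ≤ t →
      (1 / (t : ℝ)) * (∑ τ ∈ Finset.Icc 1 t, objF X y lam h (w τ)) -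
          ((1 + 3 * ε) / (1 - 7 * ε)) * objF X y lam h wstar ≤
        (4 * ε * objF X y lam h (w 0) +
            (1 / (2 * α)) * ((w 0 - wstar) ⬝ᵥ (w 0 - wstar))) /
          ((1 - 7 * ε) * (t : ℝ)) := by
  -- basic positivity facts
  have hM0 : 0 < M := by
    by_contra h'
    push_neg at h'
    have : 1 / M ≤ 0 := one_div_nonpos.mpr h'
    linarith
  have hMα : M ≤ 1 / α := by
    rw [le_div_iff₀ hα0]
    have : α * M < 1 := (lt_div_iff₀ hM0).mp hα
    linarith
  have hF0 : ∀ v, 0 ≤ objF X y lam h v := by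
    intro v
    have h1 := dot_self_nonneg' (X *ᵥ v - y)
    have h2 := mul_nonneg hlam (hh v)
    unfold objF pObj
    linarith
  -- the key per-step inequality
  have step : ∀ t : ℕ,
      (1 - 3*ε) * objF X y lam h (w (t+1)) ≤
        (1 + ε) * objF X y lam h wstar + 2*ε* objF X y lam h (w t) +
        (1/(2*α)) * ((w t - wstar) ⬝ᵥ (w t - wstar)
          - (w (t+1) - wstar) ⬝ᵥ (w (t+1) - wstar)) := by
    intro t
    set c : ℝ := 1/(2*α) with hc
    have hAB := hBRIP (A t) (hA t)
    -- prox optimality rewritten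
    have hmin : ∀ v, (fun v => gradPTilde X y S (A t) (w t) ⬝ᵥ (v - w t) + lam * h v +
        c * ((v - w t) ⬝ᵥ (v - w t) - (v - w (t+1)) ⬝ᵥ (v - w (t+1)))) (w (t+1)) ≤
        (fun v => gradPTilde X y S (A t) (w t) ⬝ᵥ (v - w t) + lam * h v +
        c * ((v - w t) ⬝ᵥ (v - w t) - (v - w (t+1)) ⬝ᵥ (v - w (t+1)))) v +
        c * ((v - w (t+1)) ⬝ᵥ (v - w (t+1))) := by
      intro v
      have H := hiter t v
      unfold proxObj at H
      rw [← hc] at H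
      dsimp only
      rw [sub_self, zero_dotProduct]
      linarith
    have h1 := min_shift (convexOn_prox h hconv lam hlam
      (gradPTilde X y S (A t) (w t)) (w t) (w (t+1)) c) hmin wstar
    rw [sub_self, zero_dotProduct] at h1
    -- quadratic expansions
    have hq1 := pTilde_expand X y S (A t) (w t) (w (t+1))
    have hqs := pTilde_expand X y S (A t) (w t) wstar
    -- BRIP bounds
    have hBR1 := (hAB (X *ᵥ w (t+1) - y)).1
    have hBRs := (hAB (X *ᵥ wstar - y)).2
    have hBRd := (hAB (X *ᵥ (w (t+1) - w t))).2
    have hEXs := encSq_nonneg S (A t) (X *ᵥ (wstar - w t))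
    -- smoothness bounds
    have hMd := hM (w (t+1) - w t)
    have hdd := dot_self_nonneg' (w (t+1) - w t)
    have hM2 : (1/2) * (M * ((w (t+1) - w t) ⬝ᵥ (w (t+1) - w t))) ≤
        c * ((w (t+1) - w t) ⬝ᵥ (w (t+1) - w t)) := by
      have h3 := mul_le_mul_of_nonneg_right hMα hdd
      have heq : c * ((w (t+1) - w t) ⬝ᵥ (w (t+1) - w t)) =
          (1/2) * ((1/α) * ((w (t+1) - w t) ⬝ᵥ (w (t+1) - w t))) := by rw [hc]; ring
      rw [heq]
      linarith
    -- (z1 - z) bound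
    have hXd : X *ᵥ (w (t+1) - w t) = (X *ᵥ w (t+1) - y) - (X *ᵥ w t - y) := by
      rw [mulVec_sub]; abel
    have hD2 : (X *ᵥ (w (t+1) - w t)) ⬝ᵥ (X *ᵥ (w (t+1) - w t)) ≤
        2 * ((X *ᵥ w (t+1) - y) ⬝ᵥ (X *ᵥ w (t+1) - y)) +
        2 * ((X *ᵥ w t - y) ⬝ᵥ (X *ᵥ w t - y)) := by
      rw [hXd]
      exact dot_sub_le _ _
    have hεD2 : ε * ((X *ᵥ (w (t+1) - w t)) ⬝ᵥ (X *ᵥ (w (t+1) - w t))) ≤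
        ε * (2 * ((X *ᵥ w (t+1) - y) ⬝ᵥ (X *ᵥ w (t+1) - y)) +
        2 * ((X *ᵥ w t - y) ⬝ᵥ (X *ᵥ w t - y))) :=
      mul_le_mul_of_nonneg_left hD2 (le_of_lt hε0)
    -- flips
    have hf1 : (wstar - w t) ⬝ᵥ (wstar - w t) = (w t - wstar) ⬝ᵥ (w t - wstar) :=
      dot_flip _ _
    have hf2 : (wstar - w (t+1)) ⬝ᵥ (wstar - w (t+1)) =
        (w (t+1) - wstar) ⬝ᵥ (w (t+1) - wstar) := dot_flip _ _
    rw [hf1, hf2] at h1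
    -- nonneg products
    have hP1 : 0 ≤ ε * (lam * h (w (t+1))) :=
      mul_nonneg (le_of_lt hε0) (mul_nonneg hlam (hh _))
    have hPs : 0 ≤ ε * (lam * h wstar) :=
      mul_nonneg (le_of_lt hε0) (mul_nonneg hlam (hh _))
    have hPt : 0 ≤ ε * (lam * h (w t)) :=
      mul_nonneg (le_of_lt hε0) (mul_nonneg hlam (hh _))
    unfold objF pObj
    linarith
  -- summed inequality by induction
  have claim : ∀ T : ℕ,
      (1 - 3*ε) * (∑ i ∈ Finset.range T, objF X y lam h (w (i+1))) +
        (1/(2*α)) * ((w T - wstar) ⬝ᵥ (w T - wstar)) ≤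
      (T : ℝ) * ((1+ε) * objF X y lam h wstar) +
        2*ε*(∑ i ∈ Finset.range T, objF X y lam h (w i)) +
        (1/(2*α)) * ((w 0 - wstar) ⬝ᵥ (w 0 - wstar)) := by
    intro T
    induction T with
    | zero => simp
    | succ T ih =>
      rw [Finset.sum_range_succ, Finset.sum_range_succ]
      have hst := step T
      push_cast
      linarith
  intro t ht
  obtain ⟨T, rfl⟩ : ∃ T, t = T + 1 := ⟨t - 1, by omega⟩
  have hkey := claim (T + 1)
  -- convert range-sum of shifted indices to Icc sum
  have hsum : ∑ τ ∈ Finset.Icc 1 (T+1), objF X y lam h (w τ) =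
      ∑ i ∈ Finset.range (T+1), objF X y lam h (w (i+1)) := by
    rw [← Finset.Ico_add_one_right_eq_Icc, Finset.sum_Ico_eq_sum_range]
    exact Finset.sum_congr rfl fun i _ => by rw [add_comm 1 i]
  -- bound the plain range sum by the shifted one plus f(w 0)
  have hshift : ∑ i ∈ Finset.range (T+1), objF X y lam h (w i) ≤
      objF X y lam h (w 0) + ∑ i ∈ Finset.range (T+1), objF X y lam h (w (i+1)) := by
    rw [Finset.sum_range_succ']
    have h1 : ∑ i ∈ Finset.range T, objF X y lam h (w (i+1)) ≤
        ∑ i ∈ Finset.range (T+1), objF X y lam h (w (i+1)) := by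
      rw [Finset.sum_range_succ]
      have := hF0 (w (T+1+1))
      linarith [hF0 (w (T+1))]
    linarith
  set Sg := ∑ i ∈ Finset.range (T+1), objF X y lam h (w (i+1)) with hSg
  have hSg0 : 0 ≤ Sg := Finset.sum_nonneg fun i _ => hF0 _
  have hRT : 0 ≤ (w (T+1) - wstar) ⬝ᵥ (w (T+1) - wstar) := dot_self_nonneg' _
  have hc0 : 0 < 1/(2*α) := by positivity
  have hFs := hF0 wstar
  have hFo := hF0 (w 0)
  have hεS : 0 ≤ ε * Sg := mul_nonneg (le_of_lt hε0) hSg0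
  have hεF0 : 0 ≤ ε * objF X y lam h (w 0) := mul_nonneg (le_of_lt hε0) hFo
  have hεTF : 0 ≤ ε * (((T:ℝ)+1) * objF X y lam h wstar) :=
    mul_nonneg (le_of_lt hε0) (mul_nonneg (by positivity) hFs)
  -- the master bound
  have key : (1 - 7*ε) * Sg ≤ ((T:ℝ)+1) * ((1+3*ε) * objF X y lam h wstar) +
      (4 * ε * objF X y lam h (w 0) +
        (1/(2*α)) * ((w 0 - wstar) ⬝ᵥ (w 0 - wstar))) := by
    have h2ε : 2*ε*(∑ i ∈ Finset.range (T+1), objF X y lam h (w i)) ≤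
        2*ε*(objF X y lam h (w 0) + Sg) :=
      mul_le_mul_of_nonneg_left hshift (by linarith)
    push_cast at hkey
    nlinarith [hkey, h2ε, hRT, hεS, hεF0, hεTF, hc0]
  -- final algebra
  have hd7 : (0:ℝ) < 1 - 7*ε := by linarith
  have hT1 : (0:ℝ) < ((T+1 : ℕ) : ℝ) := by positivity
  rw [hsum]
  rw [le_div_iff₀ (mul_pos hd7 hT1)]
  have hTne : ((T+1 : ℕ) : ℝ) ≠ 0 := ne_of_gt hT1
  have hexp : (1 / ((T+1 : ℕ) : ℝ) * Sg -
      (1 + 3*ε) / (1 - 7*ε) * objF X y lam h wstar) * ((1 - 7*ε) * ((T+1 : ℕ) : ℝ)) =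
      (1 - 7*ε) * Sg - (((T+1 : ℕ) : ℝ)) * ((1+3*ε) * objF X y lam h wstar) := by
    have hd7ne : (1:ℝ) - 7*ε ≠ 0 := ne_of_gt hd7
    have e1 : (1 + 3*ε) / (1 - 7*ε) * (1 - 7*ε) = 1 + 3*ε := div_mul_cancel₀ _ hd7ne
    have e2 : 1 / ((T+1 : ℕ) : ℝ) * ((T+1 : ℕ) : ℝ) = 1 := one_div_mul_cancel hTne
    linear_combination (1 - 7*ε) * Sg * e2 - objF X y lam h wstar * ((T+1 : ℕ) : ℝ) * e1
  rw [hexp]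
  push_cast
  push_cast at key
  linarith

end Stmt4
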